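/- Let G be a finite group that is not a p-group for a single prime (i.e., |π(G)| ≥ 2). Then the number of conjugacy classes of nontrivial proper subgroup perfect codes of G is at least |π(G)|, the number of distinct prime divisors of |G|. -/

import Mathlib

open Pointwise
set_option linter.unusedSectionVars false

/-- `H` is a subgroup perfect code of `G`: it admits an inverse-closed right transversal. -/
def IsPerfectCode {G : Type*} [Group G] (H : Subgroup G) : Prop :=
  ∃ T : Set G, Subgroup.IsComplement (H : Set G) T ∧ T⁻¹ = T

/-- The nontrivial proper subgroup perfect codes of `G`. -/
def NontrivialProperPerfectCode (G : Type*) [Group G] : Type _ :=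
  {H : Subgroup G // H ≠ ⊥ ∧ H ≠ ⊤ ∧ IsPerfectCode H}

/-- Conjugacy classes of nontrivial proper subgroup perfect codes of `G`. -/
def PerfectCodeConjClasses (G : Type*) [Group G] : Type _ :=
  Quot (fun H K : NontrivialProperPerfectCode G => ∃ g : G, MulAut.conj g • H.1 = K.1)

namespace PCAux

variable {G : Type*} [Group G] (H : Subgroup G)

/-- left coset `aH` -/
def C (a : G) : Set G := {x | a⁻¹ * x ∈ H}

/-- double coset `HaH` -/
def D (a : G) : Set G := {x | ∃ h ∈ H, ∃ k ∈ H, x = h * a * k}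

variable {H}

lemma mem_C_self (a : G) : a ∈ C H a := by simp [C, H.one_mem]

lemma C_eq_of (a b : G) (h : a⁻¹ * b ∈ H) : C H a = C H b := by
  ext x
  constructor <;> intro hx <;> simp only [C, Set.mem_setOf_eq] at *
  · have := H.mul_mem (H.inv_mem h) hx
    simpa [mul_assoc] using this
  · have := H.mul_mem h hx
    simpa [mul_assoc] using this

lemma mem_C_iff (a x : G) : x ∈ C H a ↔ a⁻¹ * x ∈ H := Iff.rfl

lemma C_disjoint {a b : G} (h : a⁻¹ * b ∉ H) : C H a ∩ C H b = ∅ := by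
  ext x
  simp only [Set.mem_inter_iff, Set.mem_empty_iff_false, iff_false]
  rintro ⟨hx1, hx2⟩
  have := H.mul_mem hx1 (H.inv_mem hx2)
  simp only [mul_inv_rev, inv_inv] at this
  exact h (by simpa [mul_assoc] using this)

lemma mem_D_self (a : G) : a ∈ D H a :=
  ⟨1, H.one_mem, 1, H.one_mem, by simp⟩

lemma mem_D_mul {a x : G} (hx : x ∈ D H a) {h k : G} (hh : h ∈ H) (hk : k ∈ H) :
    h * x * k ∈ D H a := by
  obtain ⟨h1, hh1, k1, hk1, rfl⟩ := hx
  exact ⟨h * h1, H.mul_mem hh hh1, k1 * k, H.mul_mem hk1 hk, by group⟩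

lemma D_eq_of {a b : G} (hb : b ∈ D H a) : D H b = D H a := by
  obtain ⟨h1, hh1, k1, hk1, rfl⟩ := hb
  ext x
  constructor
  · rintro ⟨h2, hh2, k2, hk2, rfl⟩
    exact ⟨h2 * h1, H.mul_mem hh2 hh1, k1 * k2, H.mul_mem hk1 hk2, by group⟩
  · rintro ⟨h2, hh2, k2, hk2, rfl⟩
    exact ⟨h2 * h1⁻¹, H.mul_mem hh2 (H.inv_mem hh1), k1⁻¹ * k2,
      H.mul_mem (H.inv_mem hk1) hk2, by group⟩

lemma inv_mem_D_inv {a x : G} (hx : x ∈ D H a) : x⁻¹ ∈ D H a⁻¹ := by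
  obtain ⟨h1, hh1, k1, hk1, rfl⟩ := hx
  exact ⟨k1⁻¹, H.inv_mem hk1, h1⁻¹, H.inv_mem hh1, by group⟩

lemma C_subset_D {a : G} : C H a ⊆ D H a := by
  intro x hx
  rw [mem_C_iff] at hx
  exact ⟨1, H.one_mem, a⁻¹ * x, hx, by group⟩

lemma D_mul_left {a h : G} (hh : h ∈ H) : D H (h * a) = D H a :=
  D_eq_of (⟨h, hh, 1, H.one_mem, by group⟩)

lemma D_mul_right {a k : G} (hk : k ∈ H) : D H (a * k) = D H a :=
  D_eq_of (⟨1, H.one_mem, k, hk, by group⟩)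

/-- the pairing lemma : if `a⁻¹ ∈ HbH` then there is `t ∈ aH` with `t⁻¹ ∈ bH`. -/
lemma pairing {a b : G} (hab : a⁻¹ ∈ D H b) :
    ∃ t : G, t ∈ C H a ∧ t⁻¹ ∈ C H b := by
  obtain ⟨h, hh, k, hk, heq⟩ := hab
  refine ⟨a * h, by simpa [mem_C_iff, mul_assoc] using hh, ?_⟩
  have : (a * h)⁻¹ = b * k := by
    have : h⁻¹ * a⁻¹ = b * k := by
      rw [heq]; group
    simpa [mul_inv_rev] using this
  rw [mem_C_iff, this]
  simpa [mul_assoc] using hk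





variable (H) in
/-- number of left cosets of `H` inside `s` -/
noncomputable def nc (s : Set G) : ℕ := ((QuotientGroup.mk : G → G ⧸ H) '' s).ncard

variable [Finite G]

lemma mk_eq_mk {a b : G} : (a : G ⧸ H) = b ↔ a⁻¹ * b ∈ H := QuotientGroup.eq

def CosetClosed (H : Subgroup G) (s : Set G) : Prop := ∀ a ∈ s, C H a ⊆ s

lemma nc_empty : nc H (∅ : Set G) = 0 := by simp [nc]

lemma nc_eq_zero {s : Set G} (h : nc H s = 0) : s = ∅ := by
  by_contra hne
  obtain ⟨a, ha⟩ := Set.nonempty_iff_ne_empty.2 hne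
  have hne2 : ((QuotientGroup.mk : G → G ⧸ H) '' s).Nonempty := ⟨_, ⟨a, ha, rfl⟩⟩
  rw [nc] at h
  exact absurd (Set.ncard_eq_zero (Set.toFinite _) |>.1 h) (Set.nonempty_iff_ne_empty.1 hne2)

lemma nc_le_one {s : Set G} {a : G} (h : s ⊆ C H a) : nc H s ≤ 1 := by
  have hsub : ((QuotientGroup.mk : G → G ⧸ H) '' s) ⊆ {(a : G ⧸ H)} := by
    rintro q ⟨x, hx, rfl⟩
    have hm := h hx
    simp only [C, Set.mem_setOf_eq] at hm
    have h2 : x⁻¹ * a ∈ H := by simpa using H.inv_mem hm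
    simp [Set.mem_singleton_iff, mk_eq_mk, h2]
  calc ((QuotientGroup.mk : G → G ⧸ H) '' s).ncard ≤ ({(a : G⧸H)} : Set _).ncard :=
        Set.ncard_le_ncard hsub (Set.toFinite _)
    _ = 1 := Set.ncard_singleton _

lemma image_diff_C {s : Set G} {a : G} (hc : CosetClosed H s) (ha : a ∈ s) :
    (QuotientGroup.mk : G → G ⧸ H) '' (s \ C H a) =
      ((QuotientGroup.mk : G → G ⧸ H) '' s) \ {(a : G ⧸ H)} := by
  ext q
  constructor
  · rintro ⟨x, ⟨hxs, hxc⟩, rfl⟩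
    refine ⟨⟨x, hxs, rfl⟩, ?_⟩
    simp only [Set.mem_singleton_iff]
    intro hq
    have := mk_eq_mk.1 hq
    exact hxc (by rw [C, Set.mem_setOf_eq]; simpa using H.inv_mem this)
  · rintro ⟨⟨x, hxs, rfl⟩, hq⟩
    refine ⟨x, ⟨hxs, fun hxc => ?_⟩, rfl⟩
    simp only [C, Set.mem_setOf_eq] at hxc
    have h2 : x⁻¹ * a ∈ H := by simpa using H.inv_mem hxc
    exact hq (by simp [Set.mem_singleton_iff, mk_eq_mk, h2])

lemma nc_diff_C {s : Set G} {a : G} (hc : CosetClosed H s) (ha : a ∈ s) :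
    nc H (s \ C H a) = nc H s - 1 := by
  rw [nc, nc, image_diff_C hc ha,
    Set.ncard_diff_singleton_of_mem (Set.mem_image_of_mem _ ha)]

lemma cosetClosed_diff_C {s : Set G} {a : G} (hc : CosetClosed H s) :
    CosetClosed H (s \ C H a) := by
  intro b hb x hx
  refine ⟨hc b hb.1 hx, fun hxa => hb.2 ?_⟩
  rw [C, Set.mem_setOf_eq] at hx hxa ⊢
  have := H.mul_mem hxa (H.inv_mem hx)
  simpa [mul_assoc] using this

lemma exists_second_coset {s : Set G} {a : G} (h2 : 2 ≤ nc H s) :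
    ∃ b ∈ s, b ∉ C H a := by
  by_contra hno
  push_neg at hno
  exact absurd (nc_le_one (fun x hx => hno x hx)) (by omega)

lemma mem_C_symm {a b : G} (h : b ∈ C H a) : a ∈ C H b := by
  rw [C, Set.mem_setOf_eq] at h ⊢
  simpa using H.inv_mem h

lemma cosetClosed_diff (s t : Set G) (hc : CosetClosed H s) (ht : CosetClosed H t) :
    CosetClosed H (s \ t) := by
  intro b hb x hx
  refine ⟨hc b hb.1 hx, fun hxt => hb.2 ?_⟩
  have hbx : b ∈ C H x := mem_C_symm hx
  exact ht x hxt hbx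

lemma C_ncard (a : G) : (C H a).ncard = Nat.card H := by
  have himg : C H a = (fun h : G => a * h) '' (H : Set G) := by
    ext x
    simp only [C, Set.mem_setOf_eq, Set.mem_image]
    constructor
    · intro hx; exact ⟨a⁻¹ * x, hx, by group⟩
    · rintro ⟨h, hh, rfl⟩; simpa using hh
  rw [himg, Set.ncard_image_of_injective _ (mul_right_injective a),
    ← Nat.card_coe_set_eq]
  rfl

lemma ncard_of_cosetClosed : ∀ (n : ℕ) (s : Set G), nc H s = n → CosetClosed H s →
    s.ncard = n * Nat.card H := by
  intro n
  induction n using Nat.strong_induction_on with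
  | _ n ih =>
    intro s hn hc
    rcases Nat.eq_zero_or_pos n with h0 | hpos
    · subst h0; rw [nc_eq_zero hn]; simp
    · have hne : s.Nonempty := by
        by_contra hemp
        rw [Set.not_nonempty_iff_eq_empty] at hemp
        subst hemp; rw [nc_empty] at hn; omega
      obtain ⟨a, ha⟩ := hne
      have hsub : C H a ⊆ s := hc a ha
      have hdiff : nc H (s \ C H a) = n - 1 := by rw [nc_diff_C hc ha, hn]
      have hrec := ih (n-1) (by omega) (s \ C H a) hdiff (cosetClosed_diff_C hc)
      have hsplit : (s \ C H a).ncard + (C H a).ncard = s.ncard :=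
        Set.ncard_diff_add_ncard_of_subset hsub (Set.toFinite _)
      rw [C_ncard] at hsplit
      have h1 : s.ncard = (n-1) * Nat.card H + Nat.card H := by omega
      rw [h1]
      have h2 : (n-1) * Nat.card H + Nat.card H = (n - 1 + 1) * Nat.card H := by ring
      rw [h2, Nat.sub_add_cancel hpos]

lemma exists_inv_fixed : ∀ (n : ℕ) (s : Set G), s.ncard = n →
    (∀ x ∈ s, x⁻¹ ∈ s) → Odd n → ∃ x ∈ s, x⁻¹ = x := by
  intro n
  induction n using Nat.strong_induction_on with
  | _ n ih =>
    intro s hn hinv hodd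
    have hne : s.Nonempty := by
      by_contra hemp
      rw [Set.not_nonempty_iff_eq_empty] at hemp
      subst hemp
      simp only [Set.ncard_empty] at hn
      subst hn
      exact (Nat.not_odd_iff_even.2 Even.zero) hodd
    obtain ⟨a, ha⟩ := hne
    by_cases hfix : a⁻¹ = a
    · exact ⟨a, ha, hfix⟩
    · have hpair : ({a, a⁻¹} : Set G) ⊆ s := by
        rintro x (rfl | rfl); exacts [ha, hinv a ha]
      have hcard2 : ({a, a⁻¹} : Set G).ncard = 2 :=
        Set.ncard_pair (fun h => hfix h.symm)
      have h2n : 2 ≤ n := by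
        rw [← hn, ← hcard2]
        exact Set.ncard_le_ncard hpair (Set.toFinite _)
      set s' := s \ {a, a⁻¹} with hs'
      have hinv' : ∀ x ∈ s', x⁻¹ ∈ s' := by
        rintro x ⟨hxs, hxn⟩
        refine ⟨hinv x hxs, ?_⟩
        simp only [Set.mem_insert_iff, Set.mem_singleton_iff] at hxn ⊢
        push_neg at hxn ⊢
        constructor
        · intro h; exact hxn.2 (by rw [← h, inv_inv])
        · intro h; exact hxn.1 (by rw [← inv_inv x, h, inv_inv])
      have hcard' : s'.ncard = n - 2 := by
        rw [hs', Set.ncard_diff hpair (Set.toFinite _), hcard2, hn]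
      have hodd' : Odd (n - 2) := by
        obtain ⟨k, hk⟩ := hodd
        exact ⟨k - 1, by omega⟩
      obtain ⟨x, hx, hfx⟩ := ih (n-2) (by omega) s' hcard' hinv' hodd'
      exact ⟨x, hx.1, hfx⟩

/-- `T` is an inverse-closed system of coset representatives for the cosets inside `s`. -/
def Good (H : Subgroup G) (T s : Set G) : Prop :=
  T ⊆ s ∧ (∀ t ∈ T, t⁻¹ ∈ T) ∧ ∀ a ∈ s, ∃! t, t ∈ T ∧ t ∈ C H a

lemma C_eq_of_mem {a x : G} (h : x ∈ C H a) : C H x = C H a := by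
  refine C_eq_of x a ?_
  rw [C, Set.mem_setOf_eq] at h
  simpa using H.inv_mem h

lemma good_empty : Good H (∅ : Set G) ∅ :=
  ⟨Set.Subset.rfl, by simp, by simp⟩

lemma good_extend {s : Set G} {a b t : G} (hclosed : CosetClosed H s)
    (ha : a ∈ s) (hb : b ∈ s) (hba : b ∉ C H a)
    (ht : t ∈ C H a) (ht' : t⁻¹ ∈ C H b) {T' : Set G}
    (hg : Good H T' ((s \ C H a) \ C H b)) : Good H ({t, t⁻¹} ∪ T') s := by
  obtain ⟨hT'sub, hT'inv, hT'uniq⟩ := hg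
  have hdisjab : C H a ∩ C H b = ∅ := by
    apply C_disjoint
    intro hmem
    exact hba hmem
  have hCa : C H t = C H a := C_eq_of_mem ht
  have hCb : C H t⁻¹ = C H b := C_eq_of_mem ht'
  have hT'a : ∀ u ∈ T', u ∉ C H a := fun u hu hua => ((hT'sub hu).1.2) hua
  have hT'b : ∀ u ∈ T', u ∉ C H b := fun u hu hub => ((hT'sub hu).2) hub
  have htne : t ∉ C H b := by
    intro hmem
    have : t ∈ C H a ∩ C H b := ⟨ht, hmem⟩
    rw [hdisjab] at this; exact this
  have htine : t⁻¹ ∉ C H a := by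
    intro hmem
    have : t⁻¹ ∈ C H a ∩ C H b := ⟨hmem, ht'⟩
    rw [hdisjab] at this; exact this
  refine ⟨?_, ?_, ?_⟩
  · rintro x ((rfl | rfl) | hx)
    · exact hclosed a ha ht
    · exact hclosed b hb ht'
    · exact ((hT'sub hx).1.1)
  · rintro x ((rfl | rfl) | hx)
    · exact Or.inl (Or.inr rfl)
    · exact Or.inl (Or.inl (inv_inv t))
    · exact Or.inr (hT'inv x hx)
  · intro c hc
    by_cases hca : c ∈ C H a
    · refine ⟨t, ⟨Or.inl (Or.inl rfl), by rwa [C_eq_of_mem hca]⟩, ?_⟩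
      rintro u ⟨((rfl | rfl) | hu), hu2⟩
      · rfl
      · rw [C_eq_of_mem hca] at hu2; exact absurd hu2 htine
      · rw [C_eq_of_mem hca] at hu2; exact absurd hu2 (hT'a u hu)
    · by_cases hcb : c ∈ C H b
      · refine ⟨t⁻¹, ⟨Or.inl (Or.inr rfl), by rwa [C_eq_of_mem hcb]⟩, ?_⟩
        rintro u ⟨((rfl | rfl) | hu), hu2⟩
        · rw [C_eq_of_mem hcb] at hu2; exact absurd hu2 htne
        · rfl
        · rw [C_eq_of_mem hcb] at hu2; exact absurd hu2 (hT'b u hu)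
      · obtain ⟨u, ⟨huT, huc⟩, huniq⟩ := hT'uniq c ⟨⟨hc, hca⟩, hcb⟩
        refine ⟨u, ⟨Or.inr huT, huc⟩, ?_⟩
        rintro v ⟨((rfl | rfl) | hv), hv2⟩
        · exact absurd (hCa ▸ mem_C_symm hv2) hca
        · exact absurd (hCb ▸ mem_C_symm hv2) hcb
        · exact huniq v ⟨hv, hv2⟩

lemma good_extend_invol {s : Set G} {w : G} (hclosed : CosetClosed H s)
    (hw : w ∈ s) (hww : w⁻¹ = w) {T' : Set G}
    (hg : Good H T' (s \ C H w)) : Good H ({w} ∪ T') s := by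
  obtain ⟨hT'sub, hT'inv, hT'uniq⟩ := hg
  have hT'w : ∀ u ∈ T', u ∉ C H w := fun u hu huw => ((hT'sub hu).2) huw
  refine ⟨?_, ?_, ?_⟩
  · rintro x (rfl | hx)
    · exact hw
    · exact (hT'sub hx).1
  · rintro x (rfl | hx)
    · exact Or.inl hww
    · exact Or.inr (hT'inv x hx)
  · intro c hc
    by_cases hcw : c ∈ C H w
    · refine ⟨w, ⟨Or.inl rfl, by rw [C_eq_of_mem hcw]; exact mem_C_self w⟩, ?_⟩
      rintro u ⟨(rfl | hu), hu2⟩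
      · rfl
      · rw [C_eq_of_mem hcw] at hu2; exact absurd hu2 (hT'w u hu)
    · obtain ⟨u, ⟨huT, huc⟩, huniq⟩ := hT'uniq c ⟨hc, hcw⟩
      refine ⟨u, ⟨Or.inr huT, huc⟩, ?_⟩
      rintro v ⟨(rfl | hv), hv2⟩
      · exact absurd (mem_C_symm hv2) hcw
      · exact huniq v ⟨hv, hv2⟩

/-- pairing off cosets inside a single self-paired double coset -/
lemma lemB : ∀ (k : ℕ) (s : Set G), CosetClosed H s →
    (∀ a ∈ s, ∀ b ∈ s, a⁻¹ ∈ D H b) → nc H s = 2 * k → ∃ T, Good H T s := by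
  intro k
  induction k using Nat.strong_induction_on with
  | _ k ih =>
    intro s hclosed hpair hnc
    rcases Nat.eq_zero_or_pos k with rfl | hpos
    · obtain rfl : s = ∅ := nc_eq_zero (by simpa using hnc)
      exact ⟨∅, good_empty⟩
    · have hne : s.Nonempty := by
        by_contra hemp
        rw [Set.not_nonempty_iff_eq_empty] at hemp
        subst hemp; rw [nc_empty] at hnc; omega
      obtain ⟨a, ha⟩ := hne
      obtain ⟨b, hb, hba⟩ := exists_second_coset (a := a) (by omega : 2 ≤ nc H s)
      obtain ⟨t, ht, ht'⟩ := pairing (hpair a ha b hb)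
      have hclosed' : CosetClosed H (s \ C H a) := cosetClosed_diff_C hclosed
      have hclosed'' : CosetClosed H ((s \ C H a) \ C H b) := cosetClosed_diff_C hclosed'
      have hnc' : nc H ((s \ C H a) \ C H b) = 2 * (k - 1) := by
        rw [nc_diff_C hclosed' ⟨hb, hba⟩, nc_diff_C hclosed ha, hnc]
        omega
      obtain ⟨T', hT'⟩ := ih (k-1) (by omega) _ hclosed''
        (fun x hx y hy => hpair x hx.1.1 y hy.1.1) hnc'
      exact ⟨_, good_extend hclosed ha hb hba ht ht' hT'⟩

/-- pairing off cosets across a pair of mutually inverse double cosets -/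
lemma lemA : ∀ (k : ℕ) (s₁ s₂ : Set G), CosetClosed H s₁ → CosetClosed H s₂ →
    (∀ a ∈ s₁, ∀ b ∈ s₂, a⁻¹ ∈ D H b) → (∀ a ∈ s₁, ∀ b ∈ s₂, b ∉ C H a) →
    nc H s₁ = k → nc H s₂ = k → ∃ T, Good H T (s₁ ∪ s₂) := by
  intro k
  induction k using Nat.strong_induction_on with
  | _ k ih =>
    intro s₁ s₂ hc1 hc2 hpair hdisj hnc1 hnc2
    rcases Nat.eq_zero_or_pos k with rfl | hpos
    · obtain rfl : s₁ = ∅ := nc_eq_zero hnc1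
      obtain rfl : s₂ = ∅ := nc_eq_zero hnc2
      exact ⟨∅, by simpa using good_empty⟩
    · have hne1 : s₁.Nonempty := by
        by_contra hemp
        rw [Set.not_nonempty_iff_eq_empty] at hemp
        subst hemp; rw [nc_empty] at hnc1; omega
      have hne2 : s₂.Nonempty := by
        by_contra hemp
        rw [Set.not_nonempty_iff_eq_empty] at hemp
        subst hemp; rw [nc_empty] at hnc2; omega
      obtain ⟨a, ha⟩ := hne1
      obtain ⟨b, hb⟩ := hne2
      obtain ⟨t, ht, ht'⟩ := pairing (hpair a ha b hb)
      -- s₂ is disjoint from C H a, and s₁ from C H b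
      have h2a : s₂ ∩ C H a = ∅ := by
        ext x
        simp only [Set.mem_inter_iff, Set.mem_empty_iff_false, iff_false]
        rintro ⟨hx2, hxa⟩
        exact hdisj a ha x hx2 hxa
      have h1b : s₁ ∩ C H b = ∅ := by
        ext x
        simp only [Set.mem_inter_iff, Set.mem_empty_iff_false, iff_false]
        rintro ⟨hx1, hxb⟩
        exact hdisj x hx1 b hb (mem_C_symm hxb)
      have hba : b ∉ C H a := hdisj a ha b hb
      have hclosedU : CosetClosed H (s₁ ∪ s₂) := by
        rintro x (hx | hx) y hy
        · left; exact hc1 x hx hy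
        · right; exact hc2 x hx hy
      have hsplit : ((s₁ ∪ s₂) \ C H a) \ C H b = (s₁ \ C H a) ∪ (s₂ \ C H b) := by
        ext x
        simp only [Set.mem_diff, Set.mem_union]
        constructor
        · rintro ⟨⟨hx | hx, hxa⟩, hxb⟩
          · left; exact ⟨hx, hxa⟩
          · right; exact ⟨hx, hxb⟩
        · rintro (⟨hx, hxa⟩ | ⟨hx, hxb⟩)
          · refine ⟨⟨Or.inl hx, hxa⟩, fun hxb => ?_⟩
            have : x ∈ s₁ ∩ C H b := ⟨hx, hxb⟩
            rw [h1b] at this; exact this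
          · refine ⟨⟨Or.inr hx, fun hxa => ?_⟩, hxb⟩
            have : x ∈ s₂ ∩ C H a := ⟨hx, hxa⟩
            rw [h2a] at this; exact this
      have hnc1' : nc H (s₁ \ C H a) = k - 1 := by rw [nc_diff_C hc1 ha, hnc1]
      have hnc2' : nc H (s₂ \ C H b) = k - 1 := by rw [nc_diff_C hc2 hb, hnc2]
      obtain ⟨T', hT'⟩ := ih (k-1) (by omega) (s₁ \ C H a) (s₂ \ C H b)
        (cosetClosed_diff_C hc1) (cosetClosed_diff_C hc2)
        (fun x hx y hy => hpair x hx.1 y hy.1)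
        (fun x hx y hy => hdisj x hx.1 y hy.1) hnc1' hnc2'
      rw [← hsplit] at hT'
      exact ⟨_, good_extend hclosedU (Or.inl ha) (Or.inr hb) hba ht ht' hT'⟩

lemma cosetClosed_D (g : G) : CosetClosed H (D H g) := by
  intro a ha x hx
  rw [C, Set.mem_setOf_eq] at hx
  have := mem_D_mul ha (H.one_mem) hx
  simpa using this

lemma inv_closed_D {g : G} (hself : g⁻¹ ∈ D H g) {x : G} (hx : x ∈ D H g) :
    x⁻¹ ∈ D H g := by
  have h1 : x⁻¹ ∈ D H g⁻¹ := inv_mem_D_inv hx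
  rwa [D_eq_of hself] at h1

lemma pairable_within {g : G} (hself : g⁻¹ ∈ D H g) {a b : G}
    (ha : a ∈ D H g) (hb : b ∈ D H g) : a⁻¹ ∈ D H b := by
  rw [D_eq_of hb]
  exact inv_closed_D hself ha

lemma pairable_across {g : G} {a b : G}
    (ha : a ∈ D H g) (hb : b ∈ D H g⁻¹) : a⁻¹ ∈ D H b := by
  rw [D_eq_of hb]
  exact inv_mem_D_inv ha

lemma card_smul_subgroup (a : MulAut G) (K : Subgroup G) :
    Nat.card (a • K : Subgroup G) = Nat.card K := by
  refine Nat.card_congr ⟨fun y => ⟨a⁻¹ • (y : G), ?_⟩, fun k => ⟨a • (k : G), ?_⟩, ?_, ?_⟩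
  · exact (Subgroup.mem_pointwise_smul_iff_inv_smul_mem).1 y.2
  · exact (Subgroup.mem_pointwise_smul_iff_inv_smul_mem).2 (by simpa using k.2)
  · intro y; ext; simp
  · intro k; ext; simp

lemma smul_inf_subgroup (a : MulAut G) (A B : Subgroup G) :
    a • (A ⊓ B) = (a • A) ⊓ (a • B) := by
  ext y
  simp only [Subgroup.mem_pointwise_smul_iff_inv_smul_mem, Subgroup.mem_inf]

lemma smul_smul_inv_subgroup (x : G) (A : Subgroup G) :
    MulAut.conj x⁻¹ • (MulAut.conj x • A) = A := by
  rw [smul_smul, map_inv]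
  simp

/-- the key bridge: the number of left cosets in `HxH` equals the index of
`xHx⁻¹ ⊓ H` in `H`. -/
lemma nc_D_eq_index (x : G) :
    nc H (D H x) = (((MulAut.conj x • H) ⊓ H).subgroupOf H).index := by
  set K := (MulAut.conj x • H) ⊓ H with hK
  set N := K.subgroupOf H with hN
  have memK : ∀ w : G, w ∈ K ↔ (x⁻¹ * w * x ∈ H ∧ w ∈ H) := by
    intro w
    rw [hK, Subgroup.mem_inf, Subgroup.mem_pointwise_smul_iff_inv_smul_mem]
    constructor
    · rintro ⟨h1, h2⟩
      refine ⟨?_, h2⟩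
      have : (MulAut.conj x)⁻¹ • w = x⁻¹ * w * x := by
        rw [← map_inv, MulAut.smul_def, MulAut.conj_apply]; group
      rwa [this] at h1
    · rintro ⟨h1, h2⟩
      refine ⟨?_, h2⟩
      have : (MulAut.conj x)⁻¹ • w = x⁻¹ * w * x := by
        rw [← map_inv, MulAut.smul_def, MulAut.conj_apply]; group
      rwa [this]
  rw [Subgroup.index_eq_card, nc, ← Nat.card_coe_set_eq]
  have hmem : ∀ u : H, QuotientGroup.mk ((u : G) * x) ∈
      (QuotientGroup.mk : G → G ⧸ H) '' (D H x) :=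
    fun u => ⟨(u : G) * x, ⟨u, u.2, 1, H.one_mem, by group⟩, rfl⟩
  have hwd : ∀ (u v : H), (QuotientGroup.leftRel N).r u v →
      (⟨QuotientGroup.mk ((u : G) * x), hmem u⟩ :
        ((QuotientGroup.mk : G → G ⧸ H) '' (D H x))) = ⟨QuotientGroup.mk ((v : G) * x), hmem v⟩ := by
    intro u v huv
    have hrel : ((u⁻¹ * v : H) : G) ∈ K := by
      have := (QuotientGroup.leftRel_apply).1 huv
      rw [hN, Subgroup.mem_subgroupOf] at this
      exact this
    rw [memK] at hrel
    apply Subtype.ext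
    show QuotientGroup.mk _ = QuotientGroup.mk _
    rw [mk_eq_mk]
    have heq3 : ((u : G) * x)⁻¹ * ((v : G) * x) = x⁻¹ * ((u : G)⁻¹ * v) * x := by group
    rw [heq3]
    exact hrel.1
  refine (Nat.card_congr (Equiv.ofBijective
    (Quotient.lift (fun u : H => (⟨QuotientGroup.mk ((u : G) * x), hmem u⟩ :
      ((QuotientGroup.mk : G → G ⧸ H) '' (D H x)))) hwd) ⟨?_, ?_⟩)).symm
  · intro q1 q2
    induction q1 using Quotient.ind
    induction q2 using Quotient.ind
    rename_i u v
    intro heq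
    have heq2 : QuotientGroup.mk ((u : G) * x) = (QuotientGroup.mk ((v : G) * x) : G ⧸ H) :=
      congrArg Subtype.val heq
    rw [mk_eq_mk] at heq2
    apply Quotient.sound
    show (QuotientGroup.leftRel N).r u v
    rw [QuotientGroup.leftRel_apply, hN, Subgroup.mem_subgroupOf]
    have hh : (x⁻¹ * ((u : G)⁻¹ * v) * x) ∈ H := by
      have heq3 : ((u : G) * x)⁻¹ * ((v : G) * x) = x⁻¹ * ((u : G)⁻¹ * v) * x := by group
      rwa [heq3] at heq2
    rw [show (((u⁻¹ * v : H) : G)) = ((u : G)⁻¹ * v) from rfl, memK]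
    exact ⟨hh, H.mul_mem (H.inv_mem u.2) v.2⟩
  · rintro ⟨q, ⟨a, ⟨h, hh, k, hk, rfl⟩, rfl⟩⟩
    refine ⟨Quotient.mk _ (⟨h, hh⟩ : H), ?_⟩
    apply Subtype.ext
    show QuotientGroup.mk _ = QuotientGroup.mk _
    rw [mk_eq_mk]
    have heq3 : (h * x)⁻¹ * (h * x * k) = k := by group
    rw [heq3]
    exact hk

lemma nc_D_inv_eq (x : G) : nc H (D H x) = nc H (D H x⁻¹) := by
  rw [nc_D_eq_index, nc_D_eq_index]
  set K1 := (MulAut.conj x • H) ⊓ H with hK1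
  set K2 := (MulAut.conj x⁻¹ • H) ⊓ H with hK2
  have hcard : Nat.card K1 = Nat.card K2 := by
    have : MulAut.conj x⁻¹ • K1 = K2 := by
      rw [hK1, smul_inf_subgroup, smul_smul_inv_subgroup, hK2, inf_comm]
    rw [← this, card_smul_subgroup]
  have h1 : K1 ≤ H := inf_le_right
  have h2 : K2 ≤ H := inf_le_right
  have hc1 : Nat.card (K1.subgroupOf H) = Nat.card K1 :=
    Nat.card_congr (Subgroup.subgroupOfEquivOfLe h1).toEquiv
  have hc2 : Nat.card (K2.subgroupOf H) = Nat.card K2 :=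
    Nat.card_congr (Subgroup.subgroupOfEquivOfLe h2).toEquiv
  have e1 := Subgroup.card_mul_index (K1.subgroupOf H)
  have e2 := Subgroup.card_mul_index (K2.subgroupOf H)
  rw [hc1, hcard] at e1
  rw [hc2] at e2
  have hpos : 0 < Nat.card K2 := Nat.card_pos
  nlinarith [e1, e2]


/-! ### Helpers for the odd-index key lemma -/

lemma odd_of_dvd {d n : ℕ} (h : Odd n) (hd : d ∣ n) : Odd d := h.of_dvd_nat hd

lemma odd_index_helper {X : Type*} [Group X] [Finite X] (S : Subgroup X)
    (h : 2 ^ ((Nat.card X).factorization 2) ∣ Nat.card S) : Odd S.index := by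
  rw [Nat.odd_iff, ← Nat.not_even_iff]
  intro heven
  have h2 : (2 : ℕ) ∣ S.index := heven.two_dvd
  have hdvd : 2 ^ ((Nat.card X).factorization 2 + 1) ∣ Nat.card X := by
    have hd2 : 2 ^ ((Nat.card X).factorization 2 + 1) ∣ Nat.card S * S.index := by
      rw [pow_succ]; exact mul_dvd_mul h h2
    rwa [Subgroup.card_mul_index] at hd2
  have hle := (Nat.Prime.pow_dvd_iff_le_factorization Nat.prime_two
    (Nat.card_pos (α := X)).ne').1 hdvd
  omega

lemma f2_eq_of_odd_index {X : Type*} [Group X] [Finite X] (S : Subgroup X)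
    (h : Odd S.index) :
    (Nat.card S).factorization 2 = (Nat.card X).factorization 2 := by
  have hc := Subgroup.card_mul_index S
  have h1 : Nat.card S ≠ 0 := (Nat.card_pos (α := S)).ne'
  have h2 : S.index ≠ 0 := by
    intro h0; rw [h0, mul_zero] at hc; exact (Nat.card_pos (α := X)).ne' hc.symm
  have := Nat.factorization_mul h1 h2
  rw [hc] at this
  have hz : (S.index).factorization 2 = 0 :=
    Nat.factorization_eq_zero_of_not_dvd (by
      intro hdvd
      have := Nat.odd_iff.1 h
      omega)
  have hpt : (Nat.card X).factorization 2 =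
      (Nat.card S).factorization 2 + (S.index).factorization 2 := by
    rw [this]; simp
  omega

lemma f2_le_of_subgroup {X : Type*} [Group X] [Finite X] (S : Subgroup X) :
    (Nat.card S).factorization 2 ≤ (Nat.card X).factorization 2 := by
  have h1 : (2:ℕ) ^ ((Nat.card S).factorization 2) ∣ Nat.card S := Nat.ordProj_dvd _ 2
  have h2 : (2:ℕ) ^ ((Nat.card S).factorization 2) ∣ Nat.card X :=
    h1.trans (Subgroup.card_subgroup_dvd_card S)
  exact (Nat.Prime.pow_dvd_iff_le_factorization Nat.prime_two
    (Nat.card_pos (α := X)).ne').1 h2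

lemma conj_smul_eq_of_mem_normalizer {T : Subgroup G} {u : G} (hu : u ∈ Subgroup.normalizer (T : Set G)) :
    MulAut.conj u • T = T := by
  ext v
  rw [Subgroup.mem_pointwise_smul_iff_inv_smul_mem]
  have hmem := Subgroup.mem_normalizer_iff.1 hu
  have : (MulAut.conj u)⁻¹ • v = u⁻¹ * v * u := by
    rw [← map_inv, MulAut.smul_def, MulAut.conj_apply]; group
  rw [this]
  constructor
  · intro h
    have := (hmem (u⁻¹ * v * u)).2
    have h2 := (hmem (u⁻¹ * v * u)).1 h
    have : u * (u⁻¹ * v * u) * u⁻¹ = v := by group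
    rwa [this] at h2
  · intro h
    exact (hmem (u⁻¹ * v * u)).2 (by
      have : u * (u⁻¹ * v * u) * u⁻¹ = v := by group
      rw [this]; exact h)

lemma mem_normalizer_of_conj_smul_eq {T : Subgroup G} {u : G}
    (h : MulAut.conj u • T = T) : u ∈ Subgroup.normalizer (T : Set G) := by
  rw [Subgroup.mem_normalizer_iff]
  intro v
  constructor
  · intro hv
    rw [← h]
    exact Subgroup.smul_mem_pointwise_smul v _ T hv
  · intro hv
    rw [← h] at hv
    rw [Subgroup.mem_pointwise_smul_iff_inv_smul_mem] at hv
    have : (MulAut.conj u)⁻¹ • (u * v * u⁻¹) = v := by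
      rw [← map_inv, MulAut.smul_def, MulAut.conj_apply]; group
    rwa [this] at hv

lemma conj_smul_le_of_mem {u : G} (hu : u ∈ H) {S : Subgroup G} (hS : S ≤ H) :
    MulAut.conj u • S ≤ H := by
  intro v hv
  rw [Subgroup.mem_pointwise_smul_iff_inv_smul_mem] at hv
  have : (MulAut.conj u)⁻¹ • v = u⁻¹ * v * u := by
    rw [← map_inv, MulAut.smul_def, MulAut.conj_apply]; group
  rw [this] at hv
  have := hS hv
  have h2 := H.mul_mem (H.mul_mem hu this) (H.inv_mem hu)
  have h3 : u * (u⁻¹ * v * u) * u⁻¹ = v := by group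
  rwa [h3] at h2

lemma smul_mono_subgroup (a : MulAut G) {A B : Subgroup G} (h : A ≤ B) :
    a • A ≤ a • B := by
  intro v hv
  rw [Subgroup.mem_pointwise_smul_iff_inv_smul_mem] at hv ⊢
  exact h hv

lemma subgroupOf_conj (u : ↥H) (S : Subgroup G) :
    (MulAut.conj u • (S.subgroupOf H)) = ((MulAut.conj (u : G)) • S).subgroupOf H := by
  ext v
  rw [Subgroup.mem_pointwise_smul_iff_inv_smul_mem, Subgroup.mem_subgroupOf,
    Subgroup.mem_subgroupOf, Subgroup.mem_pointwise_smul_iff_inv_smul_mem]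
  have h1 : ((MulAut.conj u)⁻¹ • v : ↥H) = ⟨(u:G)⁻¹ * v * u, by
      exact H.mul_mem (H.mul_mem (H.inv_mem u.2) v.2) u.2⟩ := by
    apply Subtype.ext
    rw [← map_inv, MulAut.smul_def, MulAut.conj_apply]
    simp [mul_assoc]
  have h2 : ((MulAut.conj (u:G))⁻¹ • (v:G) : G) = (u:G)⁻¹ * v * u := by
    rw [← map_inv, MulAut.smul_def, MulAut.conj_apply]; group
  rw [h1, h2]

lemma subgroup_eq_of_subgroupOf_eq {A B : Subgroup G} (hA : A ≤ H) (hB : B ≤ H)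
    (h : A.subgroupOf H = B.subgroupOf H) : A = B := by
  have := congrArg (Subgroup.map H.subtype) h
  rwa [Subgroup.subgroupOf_map_subtype, Subgroup.subgroupOf_map_subtype,
    inf_eq_left.2 hA, inf_eq_left.2 hB] at this

lemma card_subgroupOf_of_le {A : Subgroup G} (hA : A ≤ H) :
    Nat.card (A.subgroupOf H) = Nat.card A :=
  Nat.card_congr (Subgroup.subgroupOfEquivOfLe hA).toEquiv


lemma exists_sq_rep {g : G} (hself : g⁻¹ ∈ D H g) :
    ∃ x, x ∈ D H g ∧ x * x ∈ H ∧ D H x = D H g := by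
  obtain ⟨a, ha, b, hb, hgeq⟩ := hself
  have hxD : g * b ∈ D H g := ⟨1, H.one_mem, b, hb, by group⟩
  refine ⟨g * b, hxD, ?_, D_eq_of hxD⟩
  have key : a * ((g*b)*(g*b)) = b := by
    have h1 : a * ((g*b)*(g*b)) = (a*g*b)*(g*b) := by group
    rw [h1, ← hgeq]; group
  have h2 : (g*b)*(g*b) = a⁻¹ * b := eq_inv_mul_iff_mul_eq.mpr key
  rw [h2]; exact H.mul_mem (H.inv_mem ha) hb

lemma sylow_conj_in (B : Subgroup G) {T T' : Subgroup G} (hT : T ≤ B) (hT' : T' ≤ B)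
    (hcT : Nat.card T = 2 ^ ((Nat.card G).factorization 2))
    (hcT' : Nat.card T' = 2 ^ ((Nat.card G).factorization 2)) :
    ∃ c : G, c ∈ B ∧ MulAut.conj c • T = T' := by
  haveI : Fact (Nat.Prime 2) := ⟨Nat.prime_two⟩
  have hf2 : (Nat.card B).factorization 2 = (Nat.card G).factorization 2 := by
    refine le_antisymm (f2_le_of_subgroup B) ?_
    have hdvd : (2:ℕ) ^ ((Nat.card G).factorization 2) ∣ Nat.card B := by
      rw [← hcT]; exact Subgroup.card_dvd_of_le hT
    exact (Nat.Prime.pow_dvd_iff_le_factorization Nat.prime_two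
      (Nat.card_pos (α := B)).ne').1 hdvd
  have hcard1 : Nat.card (T.subgroupOf B) = 2 ^ (Nat.card B).factorization 2 := by
    rw [card_subgroupOf_of_le hT, hcT, hf2]
  have hcard2 : Nat.card (T'.subgroupOf B) = 2 ^ (Nat.card B).factorization 2 := by
    rw [card_subgroupOf_of_le hT', hcT', hf2]
  set S1 := Sylow.ofCard (T.subgroupOf B) hcard1 with hS1
  set S2 := Sylow.ofCard (T'.subgroupOf B) hcard2 with hS2
  obtain ⟨c, hc⟩ := MulAction.exists_smul_eq (↥B) S1 S2
  have hsub : MulAut.conj c • (T.subgroupOf B) = T'.subgroupOf B := by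
    have hcoe := congrArg (fun P : Sylow 2 ↥B => (P : Subgroup ↥B)) hc
    exact hcoe
  rw [subgroupOf_conj (H := B)] at hsub
  have hle : MulAut.conj (c : G) • T ≤ B := conj_smul_le_of_mem (H := B) c.2 hT
  exact ⟨↑c, c.2, subgroup_eq_of_subgroupOf_eq (H := B) hle hT' hsub⟩

set_option maxHeartbeats 1000000 in
/-- The odd-index case of the key involution lemma, by strong induction on `|G|`. -/
theorem inv2 : ∀ (n : ℕ) (G : Type u) [Group G] [Finite G] (H : Subgroup G),
    Nat.card G ≤ n → Odd H.index → ∀ g : G, g⁻¹ ∈ D H g → Odd (nc H (D H g)) →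
    ∃ t ∈ D H g, t * t = 1 := by
  intro n
  induction n using Nat.strong_induction_on with
  | _ n ih =>
    intro G _ _ H hle hHindex g hself hncodd
    haveI : Fact (Nat.Prime 2) := ⟨Nat.prime_two⟩
    classical
    -- replace g by a representative x with x * x ∈ H
    obtain ⟨x, hxD, hxx, hDx⟩ := exists_sq_rep hself
    rw [← hDx] at hncodd ⊢
    have hxself : x⁻¹ ∈ D H x := by
      rw [hDx]
      have := inv_closed_D hself hxD
      exact this
    clear hself hxD hDx g
    set cG2 := (Nat.card G).factorization 2 with hcG2
    -- the 2-part of H is full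
    have hf2H : (Nat.card H).factorization 2 = cG2 := f2_eq_of_odd_index H hHindex
    -- the subgroup K = xHx⁻¹ ⊓ H has odd index in H
    set K := (MulAut.conj x • H) ⊓ H with hK
    have hKH : K ≤ H := inf_le_right
    have hKodd : Odd ((K.subgroupOf H).index) := by
      rw [← nc_D_eq_index]
      exact hncodd
    have hf2K : (Nat.card K).factorization 2 = cG2 := by
      have := f2_eq_of_odd_index (K.subgroupOf H) hKodd
      rw [card_subgroupOf_of_le hKH] at this
      rw [this, hf2H]
    -- T: a Sylow 2-subgroup of K, of full 2-power order in G
    obtain ⟨P⟩ : Nonempty (Sylow 2 ↥K) := Sylow.nonempty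
    set T := Subgroup.map K.subtype (P : Subgroup ↥K) with hT
    have hTK : T ≤ K := Subgroup.map_subtype_le _
    have hTH : T ≤ H := hTK.trans hKH
    have hTcard : Nat.card T = 2 ^ cG2 := by
      have h1 : Nat.card T = Nat.card (P : Subgroup ↥K) :=
        (Nat.card_congr (Subgroup.equivMapOfInjective _ _
          (Subgroup.subtype_injective K)).toEquiv).symm
      rw [h1, Sylow.card_eq_multiplicity P, hf2K]
    -- conjugating T back into H
    have hTxH : MulAut.conj x⁻¹ • T ≤ H := by
      have h1 : T ≤ MulAut.conj x • H := hTK.trans inf_le_left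
      have h2 := smul_mono_subgroup (MulAut.conj x⁻¹) h1
      rwa [smul_smul_inv_subgroup] at h2
    have hT2card : Nat.card (MulAut.conj x⁻¹ • T : Subgroup G) = 2 ^ cG2 := by
      rw [card_smul_subgroup, hTcard]
    -- Sylow conjugacy inside H
    obtain ⟨c, hcH, hc⟩ := sylow_conj_in H hTxH hTH hT2card hTcard
    have hyNorm : MulAut.conj (c * x⁻¹) • T = T := by
      rw [map_mul, ← smul_smul]
      exact hc
    have hyN : MulAut.conj (x * c⁻¹) • T = T := by
      have h1 : MulAut.conj (x * c⁻¹) = (MulAut.conj (c * x⁻¹))⁻¹ := by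
        rw [← map_inv]; congr 1; group
      rw [h1, inv_smul_eq_iff]
      exact hyNorm.symm
    set N := Subgroup.normalizer (T : Set G) with hN
    have hyNmem : x * c⁻¹ ∈ N := mem_normalizer_of_conj_smul_eq hyN
    have hTleN : T ≤ N := Subgroup.le_normalizer
    set Tn := T.subgroupOf N with hTn
    haveI hTnNormal : Tn.Normal := Subgroup.normal_in_normalizer
    have hTncard : Nat.card Tn = 2 ^ cG2 := by
      rw [card_subgroupOf_of_le (H := N) hTleN, hTcard]
    have hTnOddIdx : Odd Tn.index := odd_index_helper Tn (by
      rw [hTncard]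
      exact pow_dvd_pow 2 (f2_le_of_subgroup N))
    have hcop : (Nat.card Tn).Coprime Tn.index := by
      rw [hTncard]
      refine Nat.Coprime.pow_left _ ((Nat.prime_two.coprime_iff_not_dvd).2 ?_)
      intro hdvd
      have := Nat.odd_iff.1 hTnOddIdx
      omega
    obtain ⟨M, hM⟩ := Subgroup.exists_right_complement'_of_coprime hcop
    set yN : ↥N := ⟨x * c⁻¹, hyNmem⟩ with hyN'
    obtain ⟨⟨t0s, m0s⟩, heq, -⟩ := Subgroup.isComplement_iff_existsUnique.1 hM yN
    have heqG : ((t0s.1 : ↥N) : G) * ((m0s.1 : ↥N) : G) = x * c⁻¹ := by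
      have := congrArg (fun z : ↥N => (z : G)) heq
      simpa using this
    have ht0T : ((t0s.1 : ↥N) : G) ∈ T := (Subgroup.mem_subgroupOf).1 t0s.2
    set m : G := ((m0s.1 : ↥N) : G) with hm
    have hmN : m ∈ N := (m0s.1 : ↥N).2
    have hDm : D H m = D H x := by
      have h1 : m = ((t0s.1 : ↥N) : G)⁻¹ * (x * c⁻¹) := by rw [← heqG]; group
      have h2 : D H (((t0s.1 : ↥N) : G)⁻¹ * (x * c⁻¹)) = D H (x * c⁻¹) :=
        D_mul_left (H.inv_mem (hTH ht0T))
      have h3 : D H (x * c⁻¹) = D H x := D_mul_right (H.inv_mem hcH)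
      rw [h1, h2, h3]
    have hmself : m⁻¹ ∈ D H m := by
      rw [hDm]
      exact inv_closed_D hxself (by rw [← hDm]; exact mem_D_self m)
    obtain ⟨a₁, ha₁, b₁, hb₁, hdeco⟩ := hmself
    by_cases hNtop : N = ⊤
    · -- T is normal in G; pass to the odd quotient G ⧸ T
      haveI hTnormal : T.Normal := Subgroup.normalizer_eq_top_iff.1 (hN ▸ hNtop)
      set φ := QuotientGroup.mk' T with hφ
      have hQodd : Odd (Nat.card (G ⧸ T)) := by
        rw [← Subgroup.index_eq_card]
        exact odd_index_helper T (by rw [hTcard])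
      have hGlevel : (m * b₁) * (m * b₁) = a₁⁻¹ * b₁ := by
        refine eq_inv_mul_iff_mul_eq.mpr ?_
        have h1 : a₁ * ((m*b₁)*(m*b₁)) = (a₁*m*b₁)*(m*b₁) := by group
        rw [h1, ← hdeco]; group
      set w := φ (m * b₁) with hw
      have hww : w * w = φ (a₁⁻¹ * b₁) := by rw [hw, ← map_mul, hGlevel]
      have hwwH : w * w ∈ H.map φ := by
        rw [hww]
        exact ⟨a₁⁻¹ * b₁, H.mul_mem (H.inv_mem ha₁) hb₁, rfl⟩
      have hwodd : Odd (orderOf w) := odd_of_dvd hQodd (orderOf_dvd_natCard w)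
      obtain ⟨k, hk⟩ := hwodd
      have hwmem : w ∈ H.map φ := by
        have hpow : (w * w) ^ (k + 1) = w := by
          have hsq : w * w = w ^ 2 := (sq w).symm
          rw [hsq, ← pow_mul]
          have h2 : 2 * (k+1) = orderOf w + 1 := by omega
          rw [h2, pow_succ, pow_orderOf_eq_one, one_mul]
        rw [← hpow]
        exact Subgroup.pow_mem _ hwwH _
      have hφm : φ m ∈ H.map φ := by
        have h1 : φ m = w * (φ b₁)⁻¹ := by rw [hw, map_mul]; group
        rw [h1]
        exact Subgroup.mul_mem _ hwmem (Subgroup.inv_mem _ ⟨b₁, hb₁, rfl⟩)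
      obtain ⟨h₀, hh₀, hfeq⟩ := Subgroup.mem_map.1 hφm
      have hker : h₀⁻¹ * m ∈ T := by
        have h1 : φ (h₀⁻¹ * m) = 1 := by
          rw [map_mul, map_inv, hfeq]; group
        have h2 : h₀⁻¹ * m ∈ φ.ker := MonoidHom.mem_ker.2 h1
        rwa [hφ, QuotientGroup.ker_mk' T] at h2
      have hmH : m ∈ H := by
        have := H.mul_mem hh₀ (hTH hker)
        simpa using this
      refine ⟨1, ?_, one_mul 1⟩
      rw [← hDm]
      exact ⟨m⁻¹, H.inv_mem hmH, 1, H.one_mem, by group⟩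
    · -- N is proper; use the Mackey–Frattini argument and induction
      have hcardN : Nat.card ↥N < Nat.card G := by
        rcases lt_or_eq_of_le (Nat.card_le_card_of_injective _
          (Subgroup.subtype_injective N)) with h | h
        · exact h
        · exact absurd (Subgroup.eq_top_of_card_eq N h) hNtop
      have hmNorm : MulAut.conj m • T = T := conj_smul_eq_of_mem_normalizer hmN
      have hmiNorm : MulAut.conj m⁻¹ • T = T :=
        conj_smul_eq_of_mem_normalizer (N.inv_mem hmN)
      set J := H ⊓ (MulAut.conj m • H) with hJ
      have hTJ : T ≤ J := by
        refine le_inf hTH ?_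
        have h1 : MulAut.conj m⁻¹ • T ≤ H := by rw [hmiNorm]; exact hTH
        have h2 := smul_mono_subgroup (MulAut.conj m) h1
        rwa [show MulAut.conj m • (MulAut.conj m⁻¹ • T) = T by
          rw [map_inv]; exact smul_inv_smul _ _] at h2
      set T' := MulAut.conj a₁⁻¹ • T with hT'
      have hT'H : T' ≤ H := conj_smul_le_of_mem (H.inv_mem ha₁) hTH
      have hT'J : T' ≤ J := by
        refine le_inf hT'H ?_
        have h2 : m⁻¹ * a₁⁻¹ = b₁ * m := by
          have h0 : a₁ * m = m⁻¹ * b₁⁻¹ := by rw [hdeco]; group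
          calc m⁻¹ * a₁⁻¹ = (a₁ * m)⁻¹ := by group
            _ = (m⁻¹ * b₁⁻¹)⁻¹ := by rw [h0]
            _ = b₁ * m := by group
        have h1 : MulAut.conj (m⁻¹ * a₁⁻¹) • T = MulAut.conj b₁ • T := by
          rw [h2, map_mul, ← smul_smul, hmNorm]
        have h3 : MulAut.conj m⁻¹ • T' = MulAut.conj b₁ • T := by
          rw [hT', smul_smul, ← map_mul, h1]
        have h4 : MulAut.conj m⁻¹ • T' ≤ H := by
          rw [h3]; exact conj_smul_le_of_mem hb₁ hTH
        have h5 := smul_mono_subgroup (MulAut.conj m) h4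
        rwa [show MulAut.conj m • (MulAut.conj m⁻¹ • T') = T' by
          rw [map_inv]; exact smul_inv_smul _ _] at h5
      have hT'card : Nat.card T' = 2 ^ cG2 := by
        rw [hT', card_smul_subgroup, hTcard]
      obtain ⟨cc, hccJ, hccconj⟩ := sylow_conj_in J hTJ hT'J hTcard hT'card
      set a₂ := a₁ * cc with ha₂
      have hccH : cc ∈ H := (inf_le_left : J ≤ H) hccJ
      have ha₂H : a₂ ∈ H := H.mul_mem ha₁ hccH
      have ha₂N : a₂ ∈ N := by
        apply mem_normalizer_of_conj_smul_eq
        rw [ha₂, map_mul, ← smul_smul, hccconj, hT', smul_smul, ← map_mul]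
        simp
      have hccmH : m⁻¹ * cc⁻¹ * m ∈ H := by
        have h1 : cc ∈ MulAut.conj m • H := (inf_le_right : J ≤ _) hccJ
        rw [Subgroup.mem_pointwise_smul_iff_inv_smul_mem] at h1
        have h2 : (MulAut.conj m)⁻¹ • cc = m⁻¹ * cc * m := by
          rw [← map_inv, MulAut.smul_def, MulAut.conj_apply]; group
        rw [h2] at h1
        have h3 := H.inv_mem h1
        have h4 : (m⁻¹ * cc * m)⁻¹ = m⁻¹ * cc⁻¹ * m := by group
        rwa [h4] at h3
      set b₂ := m⁻¹ * cc⁻¹ * m * b₁ with hb₂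
      have hb₂H : b₂ ∈ H := H.mul_mem hccmH hb₁
      have hdeco2 : m⁻¹ = a₂ * m * b₂ := by
        conv_lhs => rw [hdeco]
        rw [ha₂, hb₂]; group
      have hb₂N : b₂ ∈ N := by
        have h1 : (a₂ * m) * b₂ = (a₂ * m) * (m⁻¹ * a₂⁻¹ * m⁻¹) := by
          have hl : (a₂ * m) * b₂ = m⁻¹ := by rw [hdeco2]
          rw [hl]; group
        have h2 : b₂ = m⁻¹ * a₂⁻¹ * m⁻¹ := mul_left_cancel h1
        rw [h2]
        exact N.mul_mem (N.mul_mem (N.inv_mem hmN) (N.inv_mem ha₂N)) (N.inv_mem hmN)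
      set Hn := H.subgroupOf N with hHn
      have hTnHn : Tn ≤ Hn := fun t ht =>
        (Subgroup.mem_subgroupOf).2 (hTH ((Subgroup.mem_subgroupOf).1 ht))
      have hHnOdd : Odd Hn.index := odd_index_helper Hn (by
        have h1 : (2:ℕ) ^ ((Nat.card ↥N).factorization 2) ∣ 2 ^ cG2 :=
          pow_dvd_pow 2 (f2_le_of_subgroup N)
        have h2 : (2:ℕ)^cG2 ∣ Nat.card Hn := by
          rw [← hTncard]; exact Subgroup.card_dvd_of_le hTnHn
        exact h1.trans h2)
      set mn : ↥N := ⟨m, hmN⟩ with hmn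
      have hmnself : mn⁻¹ ∈ D Hn mn := by
        refine ⟨⟨a₂, ha₂N⟩, (Subgroup.mem_subgroupOf).2 ha₂H,
          ⟨b₂, hb₂N⟩, (Subgroup.mem_subgroupOf).2 hb₂H, ?_⟩
        apply Subtype.ext
        simpa using hdeco2
      have hmnodd : Odd (nc Hn (D Hn mn)) := by
        rw [nc_D_eq_index]
        apply odd_index_helper
        have hTnK' : Tn ≤ (MulAut.conj mn • Hn) ⊓ Hn := by
          refine le_inf ?_ hTnHn
          intro t ht
          rw [Subgroup.mem_pointwise_smul_iff_inv_smul_mem]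
          have hconj : (MulAut.conj mn)⁻¹ • t = mn⁻¹ * t * mn := by
            rw [← map_inv, MulAut.smul_def, MulAut.conj_apply]; group
          rw [hconj]
          refine hTnHn ?_
          have := hTnNormal.conj_mem t ht mn⁻¹
          simpa using this
        rw [card_subgroupOf_of_le (H := Hn)
          (inf_le_right : (MulAut.conj mn • Hn) ⊓ Hn ≤ Hn)]
        have h1 : (2:ℕ) ^ ((Nat.card ↥Hn).factorization 2) ∣ 2 ^ cG2 :=
          pow_dvd_pow 2 ((f2_le_of_subgroup Hn).trans (f2_le_of_subgroup N))
        have h2 : (2:ℕ)^cG2 ∣ Nat.card ((MulAut.conj mn • Hn) ⊓ Hn : Subgroup ↥N) := by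
          rw [← hTncard]; exact Subgroup.card_dvd_of_le hTnK'
        exact h1.trans h2
      obtain ⟨t', ht'D, ht'sq⟩ := ih (Nat.card ↥N) (lt_of_lt_of_le hcardN hle)
        (↥N) Hn (le_refl _) hHnOdd mn hmnself hmnodd
      obtain ⟨h₁', hh₁', k₁', hk₁', heq'⟩ := ht'D
      refine ⟨(t' : G), ?_, ?_⟩
      · rw [← hDm]
        refine ⟨(h₁' : ↥N), (Subgroup.mem_subgroupOf).1 hh₁',
          (k₁' : ↥N), (Subgroup.mem_subgroupOf).1 hk₁', ?_⟩
        have := congrArg (fun z : ↥N => (z : G)) heq'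
        simpa using this
      · have := congrArg (fun z : ↥N => (z : G)) ht'sq
        simpa using this

/-- The key involution lemma: a self-inverse double coset consisting of an odd
number of cosets contains an element of order dividing 2, provided `H` has odd
order or odd index. -/
theorem key_involution (hcond : Odd (Nat.card H) ∨ Odd H.index) {g : G}
    (hself : g⁻¹ ∈ D H g) (hodd : Odd (nc H (D H g))) : ∃ t ∈ D H g, t * t = 1 := by
  rcases hcond with hoddH | hindex
  · have hclosed := cosetClosed_D (H := H) g
    have hcard : (D H g).ncard = nc H (D H g) * Nat.card H :=
      ncard_of_cosetClosed _ _ rfl hclosed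
    have hoddcard : Odd ((D H g).ncard) := by
      rw [hcard]; exact hodd.mul hoddH
    obtain ⟨t, ht, htfix⟩ := exists_inv_fixed ((D H g).ncard) (D H g) rfl
      (fun x hx => inv_closed_D hself hx) hoddcard
    refine ⟨t, ht, ?_⟩
    rw [show t * t = t⁻¹ * t by rw [htfix]]
    exact inv_mul_cancel t
  · exact inv2 (Nat.card G) G H (le_refl _) hindex g hself hodd

lemma block_good (hcond : Odd (Nat.card H) ∨ Odd H.index) (g : G) :
    ∃ T, Good H T (D H g ∪ D H g⁻¹) := by
  by_cases hself : g⁻¹ ∈ D H g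
  · have hDD : D H g⁻¹ = D H g := D_eq_of hself
    rw [hDD, Set.union_self]
    rcases Nat.even_or_odd (nc H (D H g)) with he | ho
    · obtain ⟨k, hk⟩ := he
      exact lemB k (D H g) (cosetClosed_D g)
        (fun a ha b hb => pairable_within hself ha hb) (by omega)
    · obtain ⟨t, ht, htt⟩ := key_involution hcond hself ho
      have htinv : t⁻¹ = t := inv_eq_of_mul_eq_one_right htt
      have hclosed' : CosetClosed H (D H g \ C H t) := cosetClosed_diff_C (cosetClosed_D g)
      obtain ⟨k, hk⟩ := ho
      have hnc' : nc H (D H g \ C H t) = 2 * k := by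
        rw [nc_diff_C (cosetClosed_D g) ht, hk]; omega
      obtain ⟨T', hT'⟩ := lemB k (D H g \ C H t) hclosed'
        (fun a ha b hb => pairable_within hself ha.1 hb.1) hnc'
      exact ⟨_, good_extend_invol (cosetClosed_D g) ht htinv hT'⟩
  · -- distinct mutually inverse double cosets
    have hdisj : ∀ a ∈ D H g, ∀ b ∈ D H g⁻¹, b ∉ C H a := by
      intro a ha b hb hmem
      have hbD : b ∈ D H g := (cosetClosed_D g) a ha hmem
      have : D H g = D H g⁻¹ := by rw [← D_eq_of hbD, D_eq_of hb]
      exact hself (this ▸ (mem_D_self g⁻¹))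
    exact lemA (nc H (D H g)) (D H g) (D H g⁻¹) (cosetClosed_D g) (cosetClosed_D g⁻¹)
      (fun a ha b hb => pairable_across ha hb) hdisj rfl (nc_D_inv_eq g).symm

def BlockClosed (H : Subgroup G) (s : Set G) : Prop :=
  ∀ a ∈ s, D H a ∪ D H a⁻¹ ⊆ s

lemma good_union {s₁ s₂ T₁ T₂ : Set G} (h₁ : Good H T₁ s₁) (h₂ : Good H T₂ s₂)
    (hcc₁ : CosetClosed H s₁) (hcc₂ : CosetClosed H s₂) (hdisj : s₁ ∩ s₂ = ∅) :
    Good H (T₁ ∪ T₂) (s₁ ∪ s₂) := by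
  obtain ⟨hs1, hi1, hu1⟩ := h₁
  obtain ⟨hs2, hi2, hu2⟩ := h₂
  refine ⟨Set.union_subset_union hs1 hs2, ?_, ?_⟩
  · rintro t (ht | ht)
    · exact Or.inl (hi1 t ht)
    · exact Or.inr (hi2 t ht)
  · rintro c (hc | hc)
    · obtain ⟨u, ⟨huT, huc⟩, huniq⟩ := hu1 c hc
      refine ⟨u, ⟨Or.inl huT, huc⟩, ?_⟩
      rintro v ⟨(hv | hv), hv2⟩
      · exact huniq v ⟨hv, hv2⟩
      · exfalso
        have hv1 : v ∈ s₂ := hs2 hv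
        have : v ∈ s₁ := hcc₁ c hc hv2
        have : v ∈ s₁ ∩ s₂ := ⟨this, hv1⟩
        rw [hdisj] at this; exact this
    · obtain ⟨u, ⟨huT, huc⟩, huniq⟩ := hu2 c hc
      refine ⟨u, ⟨Or.inr huT, huc⟩, ?_⟩
      rintro v ⟨(hv | hv), hv2⟩
      · exfalso
        have hv1 : v ∈ s₁ := hs1 hv
        have : v ∈ s₂ := hcc₂ c hc hv2
        have : v ∈ s₁ ∩ s₂ := ⟨hv1, this⟩
        rw [hdisj] at this; exact this
      · exact huniq v ⟨hv, hv2⟩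

lemma master (hcond : Odd (Nat.card H) ∨ Odd H.index) :
    ∀ (n : ℕ) (s : Set G), s.ncard = n → BlockClosed H s → ∃ T, Good H T s := by
  intro n
  induction n using Nat.strong_induction_on with
  | _ n ih =>
    intro s hn hbc
    rcases Set.eq_empty_or_nonempty s with rfl | ⟨a, ha⟩
    · exact ⟨∅, good_empty⟩
    · set B := D H a ∪ D H a⁻¹ with hB
      have hBsub : B ⊆ s := hbc a ha
      have haB : a ∈ B := Or.inl (mem_D_self a)
      have hBcc : CosetClosed H B := by
        rintro x (hx | hx) y hy
        · exact Or.inl ((cosetClosed_D a) x hx hy)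
        · exact Or.inr ((cosetClosed_D a⁻¹) x hx hy)
      have hscc : CosetClosed H s := by
        intro x hx y hy
        exact hbc x hx (Or.inl (C_subset_D hy))
      set s' := s \ B with hs'
      have hbc' : BlockClosed H s' := by
        rintro b ⟨hbs, hbB⟩ c hc
        refine ⟨hbc b hbs hc, fun hcB => hbB ?_⟩
        -- b's block meets B, hence b ∈ B
        rcases hc with hc | hc <;> rcases hcB with hcB | hcB
        · exact Or.inl (by rw [← D_eq_of hcB, D_eq_of hc]; exact mem_D_self b)
        · exact Or.inr (by rw [← D_eq_of hcB, D_eq_of hc]; exact mem_D_self b)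
        · -- c ∈ D H b⁻¹ and c ∈ D H a
          have hb1 : b⁻¹ ∈ D H a := by
            rw [← D_eq_of hcB, D_eq_of hc]; exact mem_D_self b⁻¹
          have hb2 := inv_mem_D_inv hb1
          simp only [inv_inv] at hb2
          exact Or.inr hb2
        · have hb1 : b⁻¹ ∈ D H a⁻¹ := by
            rw [← D_eq_of hcB, D_eq_of hc]; exact mem_D_self b⁻¹
          have hb2 := inv_mem_D_inv hb1
          simp only [inv_inv] at hb2
          exact Or.inl hb2
      have hlt : s'.ncard < n := by
        rw [← hn]
        exact Set.ncard_lt_ncard ⟨Set.diff_subset, fun hsub => (hsub (hBsub haB)).2 haB⟩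
          (Set.toFinite _)
      obtain ⟨T', hT'⟩ := ih s'.ncard hlt s' rfl hbc'
      obtain ⟨TB, hTB⟩ := block_good hcond a
      have hcc' : CosetClosed H s' := cosetClosed_diff s B hscc hBcc
      have hdisj : B ∩ s' = ∅ := by
        ext x
        simp only [Set.mem_inter_iff, Set.mem_empty_iff_false, iff_false]
        rintro ⟨hxB, _, hxB'⟩
        exact hxB' hxB
      have hcover : B ∪ s' = s := by
        rw [hs', Set.union_diff_cancel' (le_refl B) hBsub]
      have := good_union hTB hT' hBcc hcc' hdisj
      rw [hcover] at this
      exact ⟨_, this⟩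

theorem isPerfectCode_of_odd_card_or_index
    (hcond : Odd (Nat.card H) ∨ Odd H.index) : IsPerfectCode H := by
  obtain ⟨T, hTsub, hTinv, hTuniq⟩ :=
    master hcond (Set.univ : Set G).ncard Set.univ rfl (fun a _ _ _ => Set.mem_univ _)
  refine ⟨T, ?_, ?_⟩
  · rw [Subgroup.isComplement_iff_existsUnique]
    intro g
    obtain ⟨t₀, ⟨ht₀T, ht₀C⟩, huniq⟩ := hTuniq g⁻¹ (Set.mem_univ _)
    rw [C, Set.mem_setOf_eq, inv_inv] at ht₀C
    refine ⟨⟨⟨g * t₀, ht₀C⟩, ⟨t₀⁻¹, hTinv t₀ ht₀T⟩⟩, by simp, ?_⟩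
    rintro ⟨⟨h, hh⟩, ⟨t, ht⟩⟩ heq
    simp only at heq
    -- h * t = g with h ∈ H, t ∈ T
    have htinvT : t⁻¹ ∈ T := hTinv t ht
    have htC : t⁻¹ ∈ C H g⁻¹ := by
      rw [C, Set.mem_setOf_eq, inv_inv, ← heq]
      simpa using hh
    have := huniq t⁻¹ ⟨htinvT, htC⟩
    have htval : t = t₀⁻¹ := by rw [← this, inv_inv]
    have hhval : h = g * t₀ := by
      rw [← heq, htval]; group
    simp only [Prod.ext_iff, Subtype.ext_iff]
    exact ⟨hhval, htval⟩
  · ext x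
    rw [Set.mem_inv]
    constructor
    · intro hx
      have := hTinv x⁻¹ hx
      rwa [inv_inv] at this
    · intro hx
      exact hTinv x hx

end PCAux


section Main

open PCAux

variable {G : Type*} [Group G] [Fintype G]

lemma conjRel_equivalence :
    Equivalence (fun A B : NontrivialProperPerfectCode G => ∃ g : G, MulAut.conj g • A.1 = B.1) := by
  constructor
  · intro A
    exact ⟨1, by simp⟩
  · rintro A B ⟨g, hg⟩
    refine ⟨g⁻¹, ?_⟩
    rw [← hg, map_inv, inv_smul_smul]
  · rintro A B C ⟨g, hg⟩ ⟨k, hk⟩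
    refine ⟨k * g, ?_⟩
    rw [map_mul, ← smul_smul, hg, hk]

lemma exists_sylow_code (hcard : 2 ≤ (Nat.card G).primeFactors.card)
    (p : ℕ) (hp : p ∈ (Nat.card G).primeFactors) :
    ∃ A : NontrivialProperPerfectCode G,
      Nat.card A.1 = p ^ ((Nat.card G).factorization p) := by
  classical
  obtain ⟨hpp, hpdvd, hn0⟩ := Nat.mem_primeFactors.1 hp
  haveI : Fact p.Prime := ⟨hpp⟩
  obtain ⟨P⟩ : Nonempty (Sylow p G) := Sylow.nonempty
  have hcardP : Nat.card (P : Subgroup G) = p ^ ((Nat.card G).factorization p) :=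
    Sylow.card_eq_multiplicity P
  have hvp : 0 < (Nat.card G).factorization p :=
    hpp.factorization_pos_of_dvd hn0 hpdvd
  have hne_bot : (P : Subgroup G) ≠ ⊥ := by
    intro h
    rw [h, Subgroup.card_bot] at hcardP
    have : p ≤ p ^ ((Nat.card G).factorization p) :=
      Nat.le_self_pow hvp.ne' p
    have hp2 := hpp.two_le
    omega
  have hne_top : (P : Subgroup G) ≠ ⊤ := by
    intro h
    rw [h] at hcardP
    have htop : Nat.card (⊤ : Subgroup G) = Nat.card G := by
      rw [Subgroup.card_top]
    rw [htop] at hcardP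
    obtain ⟨q, hq, hqp⟩ := Finset.exists_mem_ne (s := (Nat.card G).primeFactors) (by omega) p
    obtain ⟨hqq, hqdvd, -⟩ := Nat.mem_primeFactors.1 hq
    rw [hcardP] at hqdvd
    exact hqp ((Nat.prime_dvd_prime_iff_eq hqq hpp).1 (hqq.dvd_of_dvd_pow hqdvd))
  have hpc : IsPerfectCode (P : Subgroup G) := by
    apply isPerfectCode_of_odd_card_or_index
    by_cases hp2 : p = 2
    · right
      subst hp2
      exact odd_index_helper (P : Subgroup G) (by rw [hcardP])
    · left
      rw [hcardP]
      exact (hpp.odd_of_ne_two hp2).pow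
  exact ⟨⟨(P : Subgroup G), hne_bot, hne_top, hpc⟩, hcardP⟩

end Main

theorem stmt_13 {G : Type*} [Group G] [Fintype G]
    (h : 2 ≤ (Nat.card G).primeFactors.card) :
    (Nat.card G).primeFactors.card ≤ Nat.card (PerfectCodeConjClasses G) := by
  classical
  have hfun : ∀ p : {p // p ∈ (Nat.card G).primeFactors},
      ∃ A : NontrivialProperPerfectCode G,
        Nat.card A.1 = (p : ℕ) ^ ((Nat.card G).factorization p) :=
    fun p => exists_sylow_code h p.1 p.2
  choose F hF using hfun
  set F' : {p // p ∈ (Nat.card G).primeFactors} → PerfectCodeConjClasses G :=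
    fun p => Quot.mk _ (F p) with hF'
  have hinj : Function.Injective F' := by
    intro p q hpq
    have hrel := Quot.eq.1 hpq
    rw [Equivalence.eqvGen_iff conjRel_equivalence] at hrel
    obtain ⟨g, hg⟩ := hrel
    have hcardeq : Nat.card (F p).1 = Nat.card (F q).1 := by
      rw [← hg, PCAux.card_smul_subgroup]
    rw [hF p, hF q] at hcardeq
    obtain ⟨hpp, -, -⟩ := Nat.mem_primeFactors.1 p.2
    obtain ⟨hqq, hqdvd, hn0⟩ := Nat.mem_primeFactors.1 q.2
    have hvp : 0 < (Nat.card G).factorization p :=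
      hpp.factorization_pos_of_dvd hn0 (Nat.mem_primeFactors.1 p.2).2.1
    have hdvd : (p : ℕ) ∣ (q : ℕ) ^ ((Nat.card G).factorization q) := by
      rw [← hcardeq]
      exact dvd_pow_self _ hvp.ne'
    have : (p : ℕ) = q :=
      (Nat.prime_dvd_prime_iff_eq hpp hqq).1 (hpp.dvd_of_dvd_pow hdvd)
    exact Subtype.ext this
  haveI hfin : Finite (NontrivialProperPerfectCode G) := by
    unfold NontrivialProperPerfectCode
    infer_instance
  haveI : Finite (PerfectCodeConjClasses G) :=
    Finite.of_surjective _ Quot.mk_surjective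
  calc (Nat.card G).primeFactors.card
      = Nat.card {p // p ∈ (Nat.card G).primeFactors} :=
        (Nat.card_eq_finsetCard _).symm
    _ ≤ Nat.card (PerfectCodeConjClasses G) :=
        Nat.card_le_card_of_injective F' hinj
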